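/- Let m ≥ 1 be an integer and ζ ∈ ℂ a primitive m-th root of unity. A polynomial f ∈ ℂ[z₁,z₂,z₃] satisfies both f(ζ·z₁, ζ⁻¹·z₂, z₃) = f(z₁,z₂,z₃) and f(z₁, ζ·z₂, ζ⁻¹·z₃) = f(z₁,z₂,z₃) (as polynomial identities) if and only if f lies in the ℂ-subalgebra of ℂ[z₁,z₂,z₃] generated by the four polynomials z₁^m, z₂^m, z₃^m, and z₁z₂z₃. -/

import Mathlib

open MvPolynomial Finset

theorem scaleCoeff (w : Fin 3 → ℂ) (f : MvPolynomial (Fin 3) ℂ) (d : Fin 3 →₀ ℕ) :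
    coeff d (aeval (fun i => C (w i) * X i) f) = (∏ i, w i ^ d i) * coeff d f := by
  induction f using MvPolynomial.induction_on' with
  | monomial u c =>
    have key : aeval (fun i => C (w i) * X i) (monomial u c) = monomial u (c * ∏ i, w i ^ u i) := by
      have h1 : ∀ x : Fin 3, (aeval fun i => (C (w i) * X i : MvPolynomial (Fin 3) ℂ))
          ((X x : MvPolynomial (Fin 3) ℂ) ^ u x) = C (w x ^ u x) * X x ^ u x := by
        intro x; rw [map_pow, aeval_X, mul_pow, C_pow]
      rw [monomial_eq, monomial_eq, Finsupp.prod_pow, map_mul, map_prod, aeval_C]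
      simp only [h1]
      rw [prod_mul_distrib, ← map_prod C (fun x => w x ^ u x) univ, algebraMap_eq, C_mul]
      ring
    rw [key, coeff_monomial, coeff_monomial]
    split
    · next h => subst h; ring
    · ring
  | add p q hp hq => simp only [map_add, coeff_add, hp, hq]; ring

theorem monomial_mem (m : ℕ) (d : Fin 3 →₀ ℕ) (c : ℂ)
    (h01 : d 0 % m = d 1 % m) (h12 : d 1 % m = d 2 % m) :
    (monomial d c : MvPolynomial (Fin 3) ℂ) ∈ Algebra.adjoin ℂ
      ({X 0 ^ m, X 1 ^ m, X 2 ^ m, X 0 * X 1 * X 2} : Set (MvPolynomial (Fin 3) ℂ)) := by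
  set A := Algebra.adjoin ℂ
      ({X 0 ^ m, X 1 ^ m, X 2 ^ m, X 0 * X 1 * X 2} : Set (MvPolynomial (Fin 3) ℂ))
  set k := min (d 0) (min (d 1) (d 2)) with hk
  have hkm : k % m = d 0 % m := by
    have : k = d 0 ∨ k = d 1 ∨ k = d 2 := by omega
    rcases this with h | h | h <;> rw [h] <;> omega
  have h0 : m ∣ d 0 - k := (Nat.modEq_iff_dvd' (by omega)).mp hkm
  have h1 : m ∣ d 1 - k := (Nat.modEq_iff_dvd' (by omega)).mp (hkm.trans h01)
  have h2 : m ∣ d 2 - k := (Nat.modEq_iff_dvd' (by omega)).mp ((hkm.trans h01).trans h12)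
  obtain ⟨e0, he0⟩ := h0
  obtain ⟨e1, he1⟩ := h1
  obtain ⟨e2, he2⟩ := h2
  have key : (monomial d c : MvPolynomial (Fin 3) ℂ) =
      C c * ((X 0 * X 1 * X 2) ^ k * ((X 0 ^ m) ^ e0 * (X 1 ^ m) ^ e1 * (X 2 ^ m) ^ e2)) := by
    rw [monomial_eq, Finsupp.prod_pow, Fin.prod_univ_three]
    have ha : d 0 = k + m * e0 := by omega
    have hb : d 1 = k + m * e1 := by omega
    have hc : d 2 = k + m * e2 := by omega
    rw [ha, hb, hc]
    ring
  rw [key]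
  refine mul_mem (A.algebraMap_mem c) (mul_mem (pow_mem (Algebra.subset_adjoin ?_) k)
    (mul_mem (mul_mem (pow_mem (Algebra.subset_adjoin ?_) e0)
      (pow_mem (Algebra.subset_adjoin ?_) e1)) (pow_mem (Algebra.subset_adjoin ?_) e2))) <;> simp


theorem rootModEq {ζ : ℂ} {m : ℕ} (hζ : IsPrimitiveRoot ζ m) (hm : 0 < m) {a b : ℕ}
    (h : ζ ^ a = ζ ^ b) : a % m = b % m := by
  have key : ∀ n : ℕ, ζ ^ (n % m) = ζ ^ n := by
    intro n
    conv_rhs => rw [← Nat.div_add_mod n m]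
    rw [pow_add, pow_mul, hζ.pow_eq_one, one_pow, one_mul]
  exact hζ.pow_inj (Nat.mod_lt _ hm) (Nat.mod_lt _ hm) ((key a).trans (h.trans (key b).symm))

theorem stmt_5 (m : ℕ) (hm : 1 ≤ m) (ζ : ℂ) (hζ : IsPrimitiveRoot ζ m)
    (f : MvPolynomial (Fin 3) ℂ) :
    ((aeval (![C ζ * X 0, C ζ⁻¹ * X 1, X 2] : Fin 3 → MvPolynomial (Fin 3) ℂ)) f = f ∧
     (aeval (![X 0, C ζ * X 1, C ζ⁻¹ * X 2] : Fin 3 → MvPolynomial (Fin 3) ℂ)) f = f) ↔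
      f ∈ Algebra.adjoin ℂ
        ({X 0 ^ m, X 1 ^ m, X 2 ^ m, X 0 * X 1 * X 2} : Set (MvPolynomial (Fin 3) ℂ)) := by
  have hz : ζ ≠ 0 := hζ.ne_zero (by omega)
  have hmo : m = orderOf ζ := hζ.eq_orderOf
  have e1 : (![C ζ * X 0, C ζ⁻¹ * X 1, X 2] : Fin 3 → MvPolynomial (Fin 3) ℂ)
      = fun i => C (![ζ, ζ⁻¹, 1] i) * X i := by
    funext i; fin_cases i <;> simp
  have e2 : (![X 0, C ζ * X 1, C ζ⁻¹ * X 2] : Fin 3 → MvPolynomial (Fin 3) ℂ)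
      = fun i => C (![1, ζ, ζ⁻¹] i) * X i := by
    funext i; fin_cases i <;> simp
  constructor
  · rintro ⟨h1, h2⟩
    rw [f.as_sum]
    refine Subalgebra.sum_mem _ fun d hd => monomial_mem m d _ ?_ ?_
    · have := congrArg (coeff d) h1
      rw [e1, scaleCoeff, Fin.prod_univ_three] at this
      simp only [Matrix.cons_val_zero, Matrix.cons_val_one, Matrix.head_cons,
        Matrix.cons_val_two, Matrix.tail_cons, one_pow, mul_one] at this
      have hc : coeff d f ≠ 0 := mem_support_iff.mp hd
      have hpow : ζ ^ d 0 * ζ⁻¹ ^ d 1 = 1 :=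
        mul_right_cancel₀ hc (by rw [one_mul]; exact this)
      rw [inv_pow, mul_inv_eq_one₀ (pow_ne_zero _ hz)] at hpow
      exact rootModEq hζ (by omega) hpow
    · have := congrArg (coeff d) h2
      rw [e2, scaleCoeff, Fin.prod_univ_three] at this
      simp only [Matrix.cons_val_zero, Matrix.cons_val_one, Matrix.head_cons,
        Matrix.cons_val_two, Matrix.tail_cons, one_pow, one_mul] at this
      have hc : coeff d f ≠ 0 := mem_support_iff.mp hd
      have hpow : ζ ^ d 1 * ζ⁻¹ ^ d 2 = 1 :=
        mul_right_cancel₀ hc (by rw [one_mul]; exact this)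
      rw [inv_pow, mul_inv_eq_one₀ (pow_ne_zero _ hz)] at hpow
      exact rootModEq hζ (by omega) hpow
  · intro hf
    have hζm : ζ ^ m = 1 := hζ.pow_eq_one
    have hCC : (C ζ * C ζ⁻¹ : MvPolynomial (Fin 3) ℂ) = 1 := by
      rw [← C_mul, mul_inv_cancel₀ hz, C_1]
    have hCCi : (C ζ⁻¹ * C ζ : MvPolynomial (Fin 3) ℂ) = 1 := by
      rw [← C_mul, inv_mul_cancel₀ hz, C_1]
    have hCm : (C ζ ^ m : MvPolynomial (Fin 3) ℂ) = 1 := by rw [← C_pow, hζm, C_1]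
    have hCmi : (C ζ⁻¹ ^ m : MvPolynomial (Fin 3) ℂ) = 1 := by
      rw [← C_pow, inv_pow, hζm, inv_one, C_1]
    constructor <;>
    · refine Algebra.adjoin_induction ?_ ?_ ?_ ?_ hf
      · rintro x (rfl | rfl | rfl | rfl) <;> simp only [map_pow, map_mul, aeval_X,
          Matrix.cons_val_zero, Matrix.cons_val_one, Matrix.head_cons, Matrix.cons_val_two,
          Matrix.tail_cons, mul_pow] <;>
          first
          | (rw [hCm]; ring) | (rw [hCmi]; ring)
          | (linear_combination (X 0 * X 1 * X 2 : MvPolynomial (Fin 3) ℂ) * hCC)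
          | (linear_combination (X 0 * X 1 * X 2 : MvPolynomial (Fin 3) ℂ) * hCCi)
          | ring
      · intro r; simp
      · intro x y _ _ hx hy; rw [map_add, hx, hy]
      · intro x y _ _ hx hy; rw [map_mul, hx, hy]
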